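/- Space-time resonances of the gravity–capillary phase: let σ, μ, ν ∈ {+1, −1}, and let ξ, η ∈ ℝ² with ξ ≠ 0, η ≠ 0 and η ≠ ξ. If Φ_{σμν}(ξ, η) = 0 and the gradient of the map η ↦ Φ_{σμν}(ξ, η) vanishes at η, then σ = μ = ν, η = ξ/2, and |ξ| = γ₁ := √2. -/

import Mathlib

/-!
`Lam ξ` = √(|ξ| + |ξ|³) for ξ ∈ ℝ²; Λ_κ = κΛ for κ ∈ {+1, −1}; the phase functions are
Φ_{σμν}(ξ, η) = σΛ(ξ) − μΛ(ξ − η) − νΛ(η); γ₁ = √2 is the radius of the space-time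
resonant sphere.
-/

noncomputable section

open Real

/-- The dispersion relation Λ(ξ) = √(|ξ| + |ξ|³) on ℝ². -/
def Lam (ξ : EuclideanSpace ℝ (Fin 2)) : ℝ := Real.sqrt (‖ξ‖ + ‖ξ‖ ^ 3)

namespace Stmt11Aux

abbrev E2 := EuclideanSpace ℝ (Fin 2)

/-- The derivative of r ↦ √(r + r³). -/
def dgfun (r : ℝ) : ℝ := (1 + 3*r^2) / (2 * Real.sqrt (r + r^3))

lemma lam_arg_pos {r : ℝ} (hr : 0 < r) : 0 < r + r^3 := by positivity

lemma dg_pos {r : ℝ} (hr : 0 < r) : 0 < dgfun r := by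
  unfold dgfun
  have := Real.sqrt_pos.2 (lam_arg_pos hr)
  positivity

lemma lam_pos {r : ℝ} (hr : 0 < r) : 0 < Real.sqrt (r + r^3) :=
  Real.sqrt_pos.2 (lam_arg_pos hr)

lemma lam_lt {p q : ℝ} (hp : 0 < p) (h : p < q) :
    Real.sqrt (p + p^3) < Real.sqrt (q + q^3) := by
  have h1 : (0:ℝ) < q^2 + p*q + p^2 := by nlinarith [sq_nonneg q, mul_pos hp (hp.trans h)]
  have h2 : p + p^3 < q + q^3 := by nlinarith [mul_pos (sub_pos.2 h) h1]
  exact Real.sqrt_lt_sqrt (by positivity) h2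

lemma hasDerivAt_g {r : ℝ} (hr : 0 < r) :
    HasDerivAt (fun s : ℝ => Real.sqrt (s + s^3)) (dgfun r) r := by
  have h1 : HasDerivAt (fun s : ℝ => s + s^3) (1 + 3*r^2) r := by
    simpa using (hasDerivAt_id' r).fun_add (hasDerivAt_pow 3 r)
  have h2 := (Real.hasDerivAt_sqrt (ne_of_gt (lam_arg_pos hr))).comp r h1
  refine h2.congr_deriv ?_
  unfold dgfun
  field_simp

lemma hasFDerivAt_norm' {x : E2} (hx : x ≠ 0) :
    HasFDerivAt (fun y : E2 => ‖y‖) (‖x‖⁻¹ • innerSL ℝ x) x := by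
  have h0 : (0:ℝ) < ‖x‖ := norm_pos_iff.2 hx
  have h1 : HasFDerivAt (fun y : E2 => ‖y‖^2) (2 • innerSL ℝ x) x :=
    (hasStrictFDerivAt_norm_sq x).hasFDerivAt
  have h2 := (Real.hasDerivAt_sqrt (by positivity : ‖x‖^2 ≠ 0)).comp_hasFDerivAt x h1
  have hfun : (Real.sqrt ∘ fun y : E2 => ‖y‖^2) = fun y : E2 => ‖y‖ := by
    funext y; simp [Function.comp, Real.sqrt_sq (norm_nonneg y)]
  rw [hfun, Real.sqrt_sq h0.le] at h2
  have hsm : ((1 / (2 * ‖x‖)) • 2 • (innerSL ℝ x) : E2 →L[ℝ] ℝ) = ‖x‖⁻¹ • innerSL ℝ x := by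
    ext w
    simp only [ContinuousLinearMap.smul_apply, smul_eq_mul, two_smul,
      ContinuousLinearMap.add_apply]
    field_simp
    ring
  rwa [hsm] at h2

lemma hasFDerivAt_Lam {x : E2} (hx : x ≠ 0) :
    HasFDerivAt Lam ((dgfun ‖x‖ / ‖x‖) • innerSL ℝ x) x := by
  have h0 : (0:ℝ) < ‖x‖ := norm_pos_iff.2 hx
  have h2 := (hasDerivAt_g h0).comp_hasFDerivAt x (hasFDerivAt_norm' hx)
  have hfun : ((fun s : ℝ => Real.sqrt (s + s^3)) ∘ fun y : E2 => ‖y‖) = Lam := by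
    funext y; simp [Function.comp, Lam]
  rw [hfun, smul_smul] at h2
  have : dgfun ‖x‖ * ‖x‖⁻¹ = dgfun ‖x‖ / ‖x‖ := by ring
  rwa [this] at h2

/-- The vanishing of the η-gradient of the phase, as a vector equation. -/
lemma grad_eq (σ μ ν : ℝ)
    (ξ η : EuclideanSpace ℝ (Fin 2)) (hη : η ≠ 0) (hηξ : η ≠ ξ)
    (hgrad : fderiv ℝ (fun y : EuclideanSpace ℝ (Fin 2) =>
      σ * Lam ξ - μ * Lam (ξ - y) - ν * Lam y) η = 0) :
    (μ * (dgfun ‖ξ - η‖ / ‖ξ - η‖)) • (ξ - η) - (ν * (dgfun ‖η‖ / ‖η‖)) • η = 0 := by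
  have hξη : ξ - η ≠ 0 := sub_ne_zero.2 (Ne.symm hηξ)
  have h3 : HasFDerivAt (fun y : E2 => ξ - y) (-(ContinuousLinearMap.id ℝ E2)) η := by
    simpa using (hasFDerivAt_id η).const_sub ξ
  have h4 := (hasFDerivAt_Lam hξη).comp η h3
  have h5 : HasFDerivAt (fun y : E2 =>
      σ * Lam ξ - μ * Lam (ξ - y) - ν * Lam y)
      ((0 : E2 →L[ℝ] ℝ) - μ • (((dgfun ‖ξ - η‖ / ‖ξ - η‖) • innerSL ℝ (ξ - η)).comp
          (-(ContinuousLinearMap.id ℝ E2))) - ν • ((dgfun ‖η‖ / ‖η‖) • innerSL ℝ η)) η := by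
    exact ((hasFDerivAt_const (σ * Lam ξ) η).sub (h4.const_mul μ)).sub
      ((hasFDerivAt_Lam hη).const_mul ν)
  have hD := h5.fderiv
  rw [hgrad] at hD
  set v := (μ * (dgfun ‖ξ - η‖ / ‖ξ - η‖)) • (ξ - η) - (ν * (dgfun ‖η‖ / ‖η‖)) • η with hv
  have hinner : ∀ w : E2, inner ℝ v w = (0 : ℝ) := by
    intro w
    have := congrArg (fun L : E2 →L[ℝ] ℝ => L w) hD.symm
    simp only [ContinuousLinearMap.sub_apply, ContinuousLinearMap.smul_apply,
      ContinuousLinearMap.comp_apply, ContinuousLinearMap.neg_apply,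
      ContinuousLinearMap.id_apply, ContinuousLinearMap.zero_apply, innerSL_apply_apply,
      smul_eq_mul, inner_neg_right, inner_sub_left] at this
    rw [hv]
    simp only [inner_sub_left, real_inner_smul_left]
    linarith [this]
  exact inner_self_eq_zero.mp (hinner v)

/-- Squaring the resonance identity Λ(p+q) = Λ(p) + Λ(q). -/
lemma sum_sqrt {p q : ℝ} (hp : 0 < p) (hq : 0 < q)
    (h : Real.sqrt ((p+q) + (p+q)^3) = Real.sqrt (p+p^3) + Real.sqrt (q+q^3)) :
    4*(1+p^2)*(1+q^2) = 9*p*q*(p+q)^2 := by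
  have hP : Real.sqrt (p+p^3) ^ 2 = p + p^3 := Real.sq_sqrt (by positivity)
  have hQ : Real.sqrt (q+q^3) ^ 2 = q + q^3 := Real.sq_sqrt (by positivity)
  have h1 := congrArg (·^2) h
  rw [Real.sq_sqrt (by positivity)] at h1
  have h2 : 2 * (Real.sqrt (p+p^3) * Real.sqrt (q+q^3)) = 3*p*q*(p+q) := by
    nlinarith [h1, hP, hQ]
  have h3 := congrArg (·^2) h2
  have h4 : 4*(p+p^3)*(q+q^3) = 9*p^2*q^2*(p+q)^2 := by nlinarith [h3, hP, hQ]
  have hpq : (0:ℝ) < p*q := mul_pos hp hq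
  have key : p*q*(4*(1+p^2)*(1+q^2)) = p*q*(9*p*q*(p+q)^2) := by
    ring_nf; ring_nf at h4; linarith
  exact mul_left_cancel₀ (ne_of_gt hpq) key

/-- Squaring the group-velocity identity Λ'(p) = Λ'(q). -/
lemma dg_eq_poly {p q : ℝ} (hp : 0 < p) (hq : 0 < q) (h : dgfun p = dgfun q) :
    (1+3*p^2)^2*(q+q^3) = (1+3*q^2)^2*(p+p^3) := by
  have hP : Real.sqrt (p+p^3) ^ 2 = p + p^3 := Real.sq_sqrt (by positivity)
  have hQ : Real.sqrt (q+q^3) ^ 2 = q + q^3 := Real.sq_sqrt (by positivity)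
  have hPp : (0:ℝ) < Real.sqrt (p+p^3) := lam_pos hp
  have hQp : (0:ℝ) < Real.sqrt (q+q^3) := lam_pos hq
  unfold dgfun at h
  rw [div_eq_div_iff (by positivity) (by positivity)] at h
  have h3 := congrArg (·^2) h
  nlinarith [h3, hP, hQ]

lemma C_pos {p q : ℝ} (hp : 0 < p) (hq : 0 < q)
    (hA : 4*(1+p^2)*(1+q^2) = 9*p*q*(p+q)^2) :
    0 < 9*p^3*q^3+9*p^3*q+3*p^2*q^2+9*p*q^3+5*(p*q)-p^2-q^2-1 := by
  have ht : (0:ℝ) < p*q := mul_pos hp hq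
  nlinarith [hA, mul_nonneg ht.le (sq_nonneg (p*q - 1)), sq_nonneg (7*(p*q) - 2),
    sq_nonneg (p-q)]

lemma C_shift_pos {p y : ℝ} (hp : 0 < p) (hy : 0 < y)
    (hA : 4*(1+p^2)*(1+y^2) = 9*p*y*(p+y)^2) :
    0 < 9*p^3*(p+y)^3+9*p^3*(p+y)+3*p^2*(p+y)^2+9*p*(p+y)^3+5*(p*(p+y))-p^2-(p+y)^2-1 := by
  nlinarith [hA, mul_pos hp hy, sq_nonneg (p-y), mul_pos (mul_pos hp hp) (mul_pos hy hy),
    mul_pos hp (mul_pos hp hp), sq_nonneg (p+y), mul_pos hp hp, mul_pos hy hy,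
    mul_pos (mul_pos hp hp) (by positivity : (0:ℝ) < (p+y)^2)]

lemma poly_eq {p q : ℝ} (hp : 0 < p) (hq : 0 < q)
    (hA : 4*(1+p^2)*(1+q^2) = 9*p*q*(p+q)^2)
    (hB : (1+3*p^2)^2*(q+q^3) = (1+3*q^2)^2*(p+p^3)) : p = q := by
  have hC := C_pos hp hq hA
  have hfac : (p - q) * (9*p^3*q^3+9*p^3*q+3*p^2*q^2+9*p*q^3+5*(p*q)-p^2-q^2-1) = 0 := by
    linear_combination hB
  rcases mul_eq_zero.mp hfac with h | h
  · linarith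
  · linarith

lemma final_val {p : ℝ} (hp : 0 < p) (hA : 4*(1+p^2)*(1+p^2) = 9*p*p*(p+p)^2) :
    p^2 = 1/2 := by nlinarith [sq_nonneg p, sq_nonneg (p^2)]

set_option maxHeartbeats 1600000 in
/-- All the scalar reasoning for the space–time resonance analysis. -/
lemma scalar_main (σ μ ν p q r X Y c : ℝ)
    (hσ : σ = 1 ∨ σ = -1) (hμ : μ = 1 ∨ μ = -1) (hν : ν = 1 ∨ ν = -1)
    (hp : 0 < p) (hq : 0 < q) (hr : 0 < r)
    (hΦ : σ * Real.sqrt (r + r^3) - μ * Real.sqrt (p + p^3) - ν * Real.sqrt (q + q^3) = 0)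
    (hX : 0 < X) (hY : 0 < Y)
    (hab : μ * X * c = ν * Y)
    (hdg : dgfun p = dgfun q)
    (hpq : p = |c| * q) (hrq : r = |1 + c| * q)
    (hc0 : c ≠ 0) (h1c : 1 + c ≠ 0) :
    σ = μ ∧ μ = ν ∧ c = 1 ∧ r = Real.sqrt 2 := by
  have LP := lam_pos hp
  have LQ := lam_pos hq
  have LR := lam_pos hr
  rcases lt_trichotomy 0 c with hcpos | hczero | hcneg
  · -- c > 0 : the resonant case
    have hXc : 0 < X * c := mul_pos hX hcpos
    have hμν : μ = ν := by
      rcases hμ with h1|h1 <;> rcases hν with h2|h2 <;> rw [h1, h2] at hab ⊢ <;>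
        first
          | rfl
          | (exfalso; linarith)
    have hpq' : p = c * q := by rw [hpq, abs_of_pos hcpos]
    have hrpq : r = p + q := by
      rw [hrq, abs_of_pos (by linarith : (0:ℝ) < 1 + c), hpq']; ring
    have hΦ' : σ * Real.sqrt (r + r^3) - μ * Real.sqrt (p + p^3)
        - μ * Real.sqrt (q + q^3) = 0 := by
      linear_combination hΦ - Real.sqrt (q + q^3) * hμν
    have hkey : σ = μ ∧ Real.sqrt (r + r^3)
        = Real.sqrt (p + p^3) + Real.sqrt (q + q^3) := by
      rcases hσ with h1|h1 <;> rcases hμ with h2|h2 <;> rw [h1, h2] at hΦ' <;>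
        first
          | (exfalso; nlinarith [LP, LQ, LR])
          | exact ⟨h1.trans h2.symm, by linarith⟩
    obtain ⟨hσμ, hsum⟩ := hkey
    have hA := sum_sqrt hp hq (by rw [← hrpq]; exact hsum)
    have hB := dg_eq_poly hp hq hdg
    have hpqeq : p = q := poly_eq hp hq hA hB
    have hc1 : c = 1 := by
      have h9 : c * q = 1 * q := by rw [one_mul, ← hpq']; exact hpqeq
      exact mul_right_cancel₀ (ne_of_gt hq) h9
    rw [hpqeq] at hA
    have hq2 : q^2 = 1/2 := final_val hq hA
    have hrsq : r^2 = 2 := by rw [hrpq, hpqeq]; nlinarith [hq2]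
    have hrs : r = Real.sqrt 2 := by
      rw [show (2:ℝ) = r^2 from hrsq.symm, Real.sqrt_sq hr.le]
    exact ⟨hσμ, hμν, hc1, hrs⟩
  · exact absurd hczero.symm hc0
  · -- c < 0 : no resonances
    exfalso
    have hXc : X * c < 0 := mul_neg_of_pos_of_neg hX hcneg
    have hνμ : ν = -μ := by
      rcases hμ with h1|h1 <;> rcases hν with h2|h2 <;> rw [h1, h2] at hab ⊢ <;>
        first
          | (exfalso; linarith)
          | norm_num
    have hΦ' : σ * Real.sqrt (r + r^3) - μ * Real.sqrt (p + p^3)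
        + μ * Real.sqrt (q + q^3) = 0 := by
      linear_combination hΦ + Real.sqrt (q + q^3) * hνμ
    have hpq' : p = -c * q := by rw [hpq, abs_of_neg hcneg]
    rcases lt_trichotomy c (-1) with hm | hm | hm
    · -- c < -1 :  p = q + r
      have hrq' : r = -(1 + c) * q := by
        rw [hrq, abs_of_neg (by linarith : 1 + c < 0)]
      have hp2 : p = q + r := by rw [hpq', hrq']; ring
      have hqp : q < p := by rw [hp2]; linarith
      have hlt := lam_lt hq hqp
      have hkey : Real.sqrt (q + q^3) + Real.sqrt (r + r^3) = Real.sqrt (p + p^3) := by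
        rcases hσ with h1|h1 <;> rcases hμ with h2|h2 <;> rw [h1, h2] at hΦ' <;>
          first
            | (exfalso; nlinarith [LP, LQ, LR, hlt])
            | linarith
      have hA := sum_sqrt hq hr (by rw [← hp2]; exact hkey.symm)
      have hB := dg_eq_poly hq hp hdg.symm
      have hfac : (q - p) * (9*q^3*p^3 + 9*q^3*p + 3*q^2*p^2 + 9*q*p^3 + 5*(q*p)
          - q^2 - p^2 - 1) = 0 := by linear_combination hB
      have hC0 : 9*q^3*p^3 + 9*q^3*p + 3*q^2*p^2 + 9*q*p^3 + 5*(q*p)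
          - q^2 - p^2 - 1 = 0 := by
        rcases mul_eq_zero.mp hfac with h | h
        · exfalso; linarith
        · exact h
      rw [hp2] at hC0
      have hCp := C_shift_pos hq hr hA
      nlinarith [hC0, hCp]
    · exact h1c (by rw [hm]; ring)
    · -- -1 < c < 0 : q = p + r
      have hrq' : r = (1 + c) * q := by
        rw [hrq, abs_of_pos (by linarith : (0:ℝ) < 1 + c)]
      have hq2 : q = p + r := by rw [hpq', hrq']; ring
      have hqp : p < q := by rw [hq2]; linarith
      have hlt := lam_lt hp hqp
      have hkey : Real.sqrt (p + p^3) + Real.sqrt (r + r^3) = Real.sqrt (q + q^3) := by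
        rcases hσ with h1|h1 <;> rcases hμ with h2|h2 <;> rw [h1, h2] at hΦ' <;>
          first
            | (exfalso; nlinarith [LP, LQ, LR, hlt])
            | linarith
      have hA := sum_sqrt hp hr (by rw [← hq2]; exact hkey.symm)
      have hB := dg_eq_poly hp hq hdg
      have hfac : (p - q) * (9*p^3*q^3 + 9*p^3*q + 3*p^2*q^2 + 9*p*q^3 + 5*(p*q)
          - p^2 - q^2 - 1) = 0 := by linear_combination hB
      have hC0 : 9*p^3*q^3 + 9*p^3*q + 3*p^2*q^2 + 9*p*q^3 + 5*(p*q)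
          - p^2 - q^2 - 1 = 0 := by
        rcases mul_eq_zero.mp hfac with h | h
        · exfalso; linarith
        · exact h
      rw [hq2] at hC0
      have hCp := C_shift_pos hp hr hA
      nlinarith [hC0, hCp]

end Stmt11Aux

open Stmt11Aux in
set_option maxHeartbeats 1600000 in
/-- Space-time resonances: if ξ ≠ 0, η ≠ 0, η ≠ ξ, Φ_{σμν}(ξ, η) = 0 and
∇_η Φ_{σμν}(ξ, η) = 0, then σ = μ = ν, η = ξ/2 and |ξ| = γ₁ = √2. -/
theorem stmt11 (σ μ ν : ℝ) (hσ : σ = 1 ∨ σ = -1) (hμ : μ = 1 ∨ μ = -1) (hν : ν = 1 ∨ ν = -1)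
    (ξ η : EuclideanSpace ℝ (Fin 2)) (hξ : ξ ≠ 0) (hη : η ≠ 0) (hηξ : η ≠ ξ)
    (hΦ : σ * Lam ξ - μ * Lam (ξ - η) - ν * Lam η = 0)
    (hgrad : fderiv ℝ (fun y : EuclideanSpace ℝ (Fin 2) =>
      σ * Lam ξ - μ * Lam (ξ - y) - ν * Lam y) η = 0) :
    σ = μ ∧ μ = ν ∧ η = (2 : ℝ)⁻¹ • ξ ∧ ‖ξ‖ = Real.sqrt 2 := by
  have hξη : ξ - η ≠ 0 := sub_ne_zero.2 (Ne.symm hηξ)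
  have hq : (0:ℝ) < ‖η‖ := norm_pos_iff.2 hη
  have hp : (0:ℝ) < ‖ξ - η‖ := norm_pos_iff.2 hξη
  have hr : (0:ℝ) < ‖ξ‖ := norm_pos_iff.2 hξ
  have hμ0 : μ ≠ 0 := by rcases hμ with h|h <;> norm_num [h]
  simp only [Lam] at hΦ
  have hvec := grad_eq σ μ ν ξ η hη hηξ hgrad
  set DP := dgfun ‖ξ - η‖ with hDP
  set DQ := dgfun ‖η‖ with hDQ
  have hDP0 : (0:ℝ) < DP := by rw [hDP]; exact dg_pos hp
  have hDQ0 : (0:ℝ) < DQ := by rw [hDQ]; exact dg_pos hq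
  have hP1 : (0:ℝ) < DP / ‖ξ - η‖ := div_pos hDP0 hp
  have hQ1 : (0:ℝ) < DQ / ‖η‖ := div_pos hDQ0 hq
  have ha0 : μ * (DP / ‖ξ - η‖) ≠ 0 := mul_ne_zero hμ0 (ne_of_gt hP1)
  set c := (ν * (DQ / ‖η‖)) / (μ * (DP / ‖ξ - η‖)) with hc_def
  have hce : ξ - η = c • η := by
    have h2 := congrArg (fun z : E2 => (μ * (DP / ‖ξ - η‖))⁻¹ • z) (sub_eq_zero.mp hvec)
    simp only [smul_smul] at h2
    rw [inv_mul_cancel₀ ha0, one_smul] at h2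
    rw [hc_def, div_eq_inv_mul]
    exact h2
  have hc0 : c ≠ 0 := by
    intro h; rw [h, zero_smul] at hce; exact hξη hce
  have hxi : ξ = (1 + c) • η := by
    rw [add_smul, one_smul, ← hce]; abel
  have h1c : 1 + c ≠ 0 := by
    intro h; apply hξ; rw [hxi, h, zero_smul]
  have hpq : ‖ξ - η‖ = |c| * ‖η‖ := by rw [hce, norm_smul, Real.norm_eq_abs]
  have hrq : ‖ξ‖ = |1 + c| * ‖η‖ := by rw [hxi, norm_smul, Real.norm_eq_abs]
  have hab : μ * (DP / ‖ξ - η‖) * c = ν * (DQ / ‖η‖) := by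
    rw [hc_def, mul_div_cancel₀ _ ha0]
  have hμabs : |μ| = 1 := by rcases hμ with h|h <;> norm_num [h]
  have hνabs : |ν| = 1 := by rcases hν with h|h <;> norm_num [h]
  -- equality of group velocities
  have hdg' : dgfun ‖ξ - η‖ = dgfun ‖η‖ := by
    have habs : DP / ‖ξ - η‖ * |c| = DQ / ‖η‖ := by
      have h9 := congrArg abs hab
      rw [abs_mul, abs_mul, abs_mul, hμabs, hνabs, one_mul, one_mul,
        abs_of_pos hP1, abs_of_pos hQ1] at h9
      exact h9
    rw [hpq] at habs
    rw [← hDP, ← hDQ]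
    have hcabs : (0:ℝ) < |c| := abs_pos.2 hc0
    field_simp at habs
    nlinarith [habs, hcabs, hq]
  obtain ⟨hσμ, hμν, hc1, hrs⟩ := scalar_main σ μ ν ‖ξ - η‖ ‖η‖ ‖ξ‖
    (DP / ‖ξ - η‖) (DQ / ‖η‖) c hσ hμ hν hp hq hr hΦ hP1 hQ1 hab hdg' hpq hrq hc0 h1c
  refine ⟨hσμ, hμν, ?_, hrs⟩
  rw [hc1] at hxi
  norm_num at hxi
  rw [hxi, smul_smul]
  norm_num

end
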